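/- If N and M are odd positive integers, then gcd(2^N + 1, 2^M + 1) = 2^gcd(N,M) + 1. -/

import Mathlib

lemma gcd_pow_sub_one (m : ℕ) : ∀ n, Nat.gcd (2 ^ m - 1) (2 ^ n - 1) = 2 ^ Nat.gcd m n - 1 := by
  induction m using Nat.strong_induction_on with
  | _ m ih =>
    intro n
    rcases Nat.eq_zero_or_pos m with hm | hm
    · simp [hm]
    · have hr : n % m < m := Nat.mod_lt _ hm
      have key : ∃ k, 2 ^ n - 1 = (2 ^ (n % m) - 1) + (2 ^ m - 1) * k := by
        have h1 : (2:ℕ) ^ m - 1 ∣ (2 ^ m) ^ (n / m) - 1 ^ (n / m) :=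
          Nat.sub_dvd_pow_sub_pow _ _ _
        obtain ⟨s, hs⟩ := h1
        rw [one_pow] at hs
        refine ⟨s * 2 ^ (n % m), ?_⟩
        have hn : (2:ℕ) ^ n = (2 ^ m) ^ (n / m) * 2 ^ (n % m) := by
          rw [← pow_mul, ← pow_add, Nat.div_add_mod]
        have h2 : (1:ℕ) ≤ 2 ^ (n % m) := Nat.one_le_two_pow
        have h3 : (1:ℕ) ≤ (2 ^ m) ^ (n / m) := Nat.one_le_pow _ _ (by positivity)
        have e1 : (2 ^ m - 1) * (s * 2 ^ (n % m))
            = ((2 ^ m) ^ (n / m) - 1) * 2 ^ (n % m) := by rw [hs]; ring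
        have e2 : ((2 ^ m) ^ (n / m) - 1) * 2 ^ (n % m)
            = (2 ^ m) ^ (n / m) * 2 ^ (n % m) - 2 ^ (n % m) := by
          rw [Nat.sub_mul, one_mul]
        have h4 : (2:ℕ) ^ (n % m) ≤ (2 ^ m) ^ (n / m) * 2 ^ (n % m) :=
          Nat.le_mul_of_pos_left _ (by positivity)
        omega
      obtain ⟨k, hk⟩ := key
      rw [hk, Nat.gcd_add_mul_left_right, Nat.gcd_comm, ih _ hr m,
        Nat.gcd_rec m n]

lemma two_pow_split (n : ℕ) : (2:ℕ) ^ (2 * n) - 1 = (2 ^ n + 1) * (2 ^ n - 1) := by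
  have h1 : (1:ℕ) ≤ 2 ^ n := Nat.one_le_two_pow
  have h2 : (1:ℕ) ≤ 2 ^ (2 * n) := Nat.one_le_two_pow
  rw [two_mul, pow_add]
  have h2' : (1:ℕ) ≤ 2 ^ n * 2 ^ n := Nat.one_le_iff_ne_zero.mpr (by positivity)
  zify [h1, h2']
  ring

theorem gcd_two_pow_add_one (N M : ℕ) (hN : 0 < N) (hM : 0 < M)
    (hNodd : Odd N) (hModd : Odd M) :
    Nat.gcd (2 ^ N + 1) (2 ^ M + 1) = 2 ^ Nat.gcd N M + 1 := by
  set g := Nat.gcd N M with hg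
  have hgpos : 0 < g := Nat.gcd_pos_of_pos_left _ hN
  apply Nat.dvd_antisymm
  · set d := Nat.gcd (2 ^ N + 1) (2 ^ M + 1) with hd
    have hdN : d ∣ 2 ^ N + 1 := Nat.gcd_dvd_left _ _
    have hdM : d ∣ 2 ^ M + 1 := Nat.gcd_dvd_right _ _
    have h2N : (2:ℕ) ^ N + 1 ∣ 2 ^ (2 * N) - 1 := by
      rw [two_pow_split]; exact Dvd.intro _ rfl
    have h2M : (2:ℕ) ^ M + 1 ∣ 2 ^ (2 * M) - 1 := by
      rw [two_pow_split]; exact Dvd.intro _ rfl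
    have hdvd : d ∣ 2 ^ (2 * g) - 1 := by
      have := Nat.dvd_gcd (hdN.trans h2N) (hdM.trans h2M)
      rwa [gcd_pow_sub_one, Nat.gcd_mul_left, ← hg] at this
    rw [two_pow_split] at hdvd
    have hcop : Nat.Coprime d (2 ^ g - 1) := by
      have hgN : (2:ℕ) ^ g - 1 ∣ 2 ^ N - 1 := by
        obtain ⟨k, hk⟩ := Nat.gcd_dvd_left N M
        have := Nat.sub_dvd_pow_sub_pow (2 ^ g) 1 k
        rwa [one_pow, ← pow_mul, ← hk] at this
      have h2 : Nat.gcd d (2 ^ g - 1) ∣ 2 := by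
        have ha : Nat.gcd d (2 ^ g - 1) ∣ 2 ^ N + 1 :=
          (Nat.gcd_dvd_left _ _).trans hdN
        have hb : Nat.gcd d (2 ^ g - 1) ∣ 2 ^ N - 1 :=
          (Nat.gcd_dvd_right _ _).trans hgN
        have h1 : (1:ℕ) ≤ 2 ^ N := Nat.one_le_two_pow
        have := Nat.dvd_sub ha hb
        have heq : 2 ^ N + 1 - (2 ^ N - 1) = 2 := by omega
        rwa [heq] at this
      have hodd : Odd d := by
        have hev : Even ((2:ℕ) ^ N) := (Nat.even_pow).mpr ⟨even_two, by omega⟩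
        exact (hev.add_one).of_dvd_nat hdN
      rcases (Nat.dvd_prime Nat.prime_two).mp h2 with h | h
      · exact h
      · exfalso
        have : (2:ℕ) ∣ d := h ▸ Nat.gcd_dvd_left _ _
        rw [Nat.odd_iff] at hodd
        omega
    exact hcop.dvd_of_dvd_mul_right hdvd
  · apply Nat.dvd_gcd
    · obtain ⟨k, hk⟩ := Nat.gcd_dvd_left N M
      have hkodd : Odd k := by
        rcases Nat.even_or_odd k with he | ho
        · exact absurd (hk ▸ he.mul_left g) (Nat.not_even_iff_odd.mpr hNodd)
        · exact ho
      have := hkodd.nat_add_dvd_pow_add_pow (2 ^ g) 1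
      rwa [one_pow, ← pow_mul, ← hk] at this
    · obtain ⟨k, hk⟩ := Nat.gcd_dvd_right N M
      have hkodd : Odd k := by
        rcases Nat.even_or_odd k with he | ho
        · exact absurd (hk ▸ he.mul_left g) (Nat.not_even_iff_odd.mpr hModd)
        · exact ho
      have := hkodd.nat_add_dvd_pow_add_pow (2 ^ g) 1
      rwa [one_pow, ← pow_mul, ← hk] at this
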